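/- arXiv:1907.00675 — 2 statements merged into one kernel-verified Lean document; each statement's English description precedes it below -/
import Mathlib

section
/- For every complex number z, |z| ≤ ψ(z) ≤ √5·|z|, where ψ(z) = max over γ ∈ {-2, 2i, -2i, 1+2i, 1-2i} of Re(γ·z). -/
open Complex

noncomputable def psi (z : ℂ) : ℝ :=
  max (max (max ((-2 * z).re) ((2 * I * z).re))
           (max ((-2 * I * z).re) (((1 + 2 * I) * z).re)))
      (((1 - 2 * I) * z).re)

theorem psi_comparable_to_abs (z : ℂ) :
    ‖z‖ ≤ psi z ∧ psi z ≤ Real.sqrt 5 * ‖z‖ := by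
  have hpsi : psi z = max (max (max (-2 * z.re) (-2 * z.im))
      (max (2 * z.im) (z.re - 2 * z.im))) (z.re + 2 * z.im) := by
    simp [psi, Complex.mul_re, Complex.add_re, Complex.sub_re]
  constructor
  · -- lower bound
    have h0 : 0 ≤ psi z := by
      rw [hpsi]
      rcases le_or_gt 0 z.im with h | h
      · exact le_trans (by linarith) ((le_max_left _ _).trans (le_max_right _ _) |>.trans (le_max_left _ _))
      · exact le_trans (by linarith) ((le_max_right _ _).trans (le_max_left _ _) |>.trans (le_max_left _ _))
    have hsq : z.re ^ 2 + z.im ^ 2 ≤ (psi z) ^ 2 := by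
      set p := psi z with hp
      have h1 : -2 * z.re ≤ p := by rw [hpsi]; exact le_max_of_le_left (le_max_of_le_left (le_max_left _ _))
      have h2 : -2 * z.im ≤ p := by rw [hpsi]; exact le_max_of_le_left (le_max_of_le_left (le_max_right _ _))
      have h3 : 2 * z.im ≤ p := by rw [hpsi]; exact le_max_of_le_left (le_max_of_le_right (le_max_left _ _))
      have h4 : z.re - 2 * z.im ≤ p := by rw [hpsi]; exact le_max_of_le_left (le_max_of_le_right (le_max_right _ _))
      have h5 : z.re + 2 * z.im ≤ p := by rw [hpsi]; exact le_max_right _ _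
      rcases le_or_gt 0 z.re with h | h
      · nlinarith [sq_nonneg (z.re - 2*z.im), sq_nonneg (z.re + 2*z.im), mul_nonneg (sub_nonneg.2 h4) (sub_nonneg.2 h5)]
      · nlinarith [mul_nonneg (sub_nonneg.2 h1) (sub_nonneg.2 h2), mul_nonneg (sub_nonneg.2 h1) (sub_nonneg.2 h3)]
    calc ‖z‖ = Real.sqrt (z.re ^ 2 + z.im ^ 2) := by
          rw [Complex.norm_def, Complex.normSq_apply]; ring_nf
      _ ≤ Real.sqrt ((psi z) ^ 2) := Real.sqrt_le_sqrt hsq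
      _ = psi z := Real.sqrt_sq h0
  · -- upper bound
    have h2le : (2:ℝ) ≤ Real.sqrt 5 := by
      rw [show (2:ℝ) = Real.sqrt 4 by rw [show (4:ℝ) = 2^2 by norm_num, Real.sqrt_sq]; norm_num]
      exact Real.sqrt_le_sqrt (by norm_num)
    have key : ∀ γ : ℂ, ‖γ‖ ≤ Real.sqrt 5 → (γ * z).re ≤ Real.sqrt 5 * ‖z‖ := by
      intro γ hγ
      calc (γ * z).re ≤ ‖γ * z‖ := Complex.re_le_norm _
        _ = ‖γ‖ * ‖z‖ := norm_mul _ _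
        _ ≤ Real.sqrt 5 * ‖z‖ := by
            exact mul_le_mul_of_nonneg_right hγ (norm_nonneg z)
    have a1 : ‖(-2 : ℂ)‖ ≤ Real.sqrt 5 := by
      simpa using h2le
    have a2 : ‖(2 * I : ℂ)‖ ≤ Real.sqrt 5 := by
      simpa using h2le
    have a3 : ‖(-2 * I : ℂ)‖ ≤ Real.sqrt 5 := by
      simpa using h2le
    have a4 : ‖(1 + 2 * I : ℂ)‖ ≤ Real.sqrt 5 := by
      rw [Complex.norm_def]
      apply Real.sqrt_le_sqrt
      simp [Complex.normSq_apply]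
      norm_num
    have a5 : ‖(1 - 2 * I : ℂ)‖ ≤ Real.sqrt 5 := by
      rw [Complex.norm_def]
      apply Real.sqrt_le_sqrt
      simp [Complex.normSq_apply]
      norm_num
    simp only [psi, max_le_iff]
    exact ⟨⟨⟨key _ a1, key _ a2⟩, key _ a3, key _ a4⟩, key _ a5⟩
end

section
/- A Gaussian integer ζ satisfies ζⁿ ∈ ℝ for some integer n ≥ 1 if and only if ζ is an integer multiple of one of 1, i, 1+i, or 1−i. -/
open Complex

-- existence of an odd prime divisor of a^2+b^2 in the nondegenerate coprime case
lemma odd_prime_dvd (a b : ℤ) (hab : IsCoprime a b) (ha : a ≠ 0) (hb : b ≠ 0)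
    (hsq : a ^ 2 ≠ b ^ 2) :
    ∃ p : ℕ, p.Prime ∧ Odd p ∧ (p : ℤ) ∣ a ^ 2 + b ^ 2 := by
  have hne : ¬ (Even a ∧ Even b) := by
    rintro ⟨⟨u, hu⟩, ⟨v, hv⟩⟩
    have h2 : (2 : ℤ) ∣ a := ⟨u, by omega⟩
    have h2' : (2 : ℤ) ∣ b := ⟨v, by omega⟩
    have := hab.isUnit_of_dvd' h2 h2'
    rw [Int.isUnit_iff] at this
    omega
  obtain ⟨m, hmodd, hmdvd, hm2⟩ : ∃ m : ℤ, Odd m ∧ m ∣ a ^ 2 + b ^ 2 ∧ a ^ 2 + b ^ 2 ≤ 2 * m := by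
    rcases Int.even_or_odd a with haa | ⟨u, hu⟩
    · rcases Int.even_or_odd b with hbb | ⟨v, hv⟩
      · exact absurd ⟨haa, hbb⟩ hne
      · obtain ⟨w, hw⟩ := haa
        refine ⟨a ^ 2 + b ^ 2, ⟨2 * w * w + 2 * v * v + 2 * v, by rw [hw, hv]; ring⟩,
          dvd_refl _, by nlinarith [sq_nonneg a, sq_nonneg b]⟩
    · rcases Int.even_or_odd b with ⟨v, hv⟩ | ⟨v, hv⟩
      · refine ⟨a ^ 2 + b ^ 2, ⟨2 * u * u + 2 * u + 2 * v * v, by rw [hu, hv]; ring⟩,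
          dvd_refl _, by nlinarith [sq_nonneg a, sq_nonneg b]⟩
      · refine ⟨2 * (u * u + u + v * v + v) + 1,
          ⟨u * u + u + v * v + v, by ring⟩,
          ⟨2, by rw [hu, hv]; ring⟩, by rw [hu, hv]; apply le_of_eq; ring⟩
  have h1 : 1 ≤ a ^ 2 := by rcases lt_or_gt_of_ne ha with h | h <;> nlinarith
  have h2 : 1 ≤ b ^ 2 := by rcases lt_or_gt_of_ne hb with h | h <;> nlinarith
  have hm1 : 1 < m := by
    have hneq : a ^ 2 + b ^ 2 ≠ 2 := by
      intro h
      have ha1 : a ^ 2 = 1 := by linarith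
      have hb1 : b ^ 2 = 1 := by linarith
      exact hsq (by rw [ha1, hb1])
    have hN3 : 3 ≤ a ^ 2 + b ^ 2 := by
      rcases lt_or_ge (a ^ 2 + b ^ 2) 3 with h | h
      · exfalso; apply hneq; linarith
      · exact h
    have h3 : 3 ≤ 2 * m := le_trans hN3 hm2
    omega
  obtain ⟨p, hp, hpd⟩ := Nat.exists_prime_and_dvd (n := m.natAbs)
    (by omega : m.natAbs ≠ 1)
  have hpm : (p : ℤ) ∣ m := (Int.natCast_dvd_natCast.mpr hpd).trans (Int.natAbs_dvd.mpr dvd_rfl)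
  refine ⟨p, hp, ?_, hpm.trans hmdvd⟩
  rcases hp.eq_two_or_odd' with rfl | hodd
  · exfalso
    rcases hpm with ⟨t, ht⟩
    rcases hmodd with ⟨s, hs⟩
    omega
  · exact hodd

lemma key (a b : ℤ) (hab : IsCoprime a b) (ha : a ≠ 0) (hb : b ≠ 0)
    (hsq : a ^ 2 ≠ b ^ 2) (n : ℕ) (hn : 1 ≤ n)
    (h : (((a : ℂ) + (b : ℂ) * I) ^ n).im = 0) : False := by
  obtain ⟨p, hp, hodd, hpd⟩ := odd_prime_dvd a b hab ha hb hsq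
  haveI : Fact p.Prime := ⟨hp⟩
  set z : GaussianInt := ⟨a, b⟩ with hz
  have hzc : (z : ℂ) = (a : ℂ) + (b : ℂ) * I := GaussianInt.toComplex_def' a b
  have him : ((z ^ n).im : ℝ) = 0 := by
    rw [GaussianInt.intCast_im, map_pow, hzc, h]
  have himz : (z ^ n).im = 0 := by exact_mod_cast him
  have hstar : star z ^ n = z ^ n := by
    rw [← star_pow]
    exact Zsqrtd.ext (Zsqrtd.re_star _) (by rw [Zsqrtd.im_star, himz, neg_zero])
  have hpa : ((a : ZMod p)) ≠ 0 := by
    rw [Ne, ZMod.intCast_zmod_eq_zero_iff_dvd]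
    intro hda
    have hdb : (p : ℤ) ∣ b ^ 2 := by
      have : (p : ℤ) ∣ a ^ 2 := Dvd.dvd.pow hda (by norm_num)
      exact (dvd_add_right this).mp hpd
    have hdb' : (p : ℤ) ∣ b := (Nat.prime_iff_prime_int.mp hp).dvd_of_dvd_pow hdb
    exact (Nat.prime_iff_prime_int.mp hp).not_unit (hab.isUnit_of_dvd' hda hdb')
  have hpb : ((b : ZMod p)) ≠ 0 := by
    rw [Ne, ZMod.intCast_zmod_eq_zero_iff_dvd]
    intro hdb
    have hda : (p : ℤ) ∣ a ^ 2 := by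
      have : (p : ℤ) ∣ b ^ 2 := Dvd.dvd.pow hdb (by norm_num)
      exact (dvd_add_left this).mp hpd
    have hda' : (p : ℤ) ∣ a := (Nat.prime_iff_prime_int.mp hp).dvd_of_dvd_pow hda
    exact (Nat.prime_iff_prime_int.mp hp).not_unit (hab.isUnit_of_dvd' hda' hdb)
  have hsum : (a : ZMod p) ^ 2 + (b : ZMod p) ^ 2 = 0 := by
    have : ((a ^ 2 + b ^ 2 : ℤ) : ZMod p) = 0 :=
      (ZMod.intCast_zmod_eq_zero_iff_dvd _ p).mpr hpd
    push_cast at this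
    exact this
  set A : ZMod p := (a : ZMod p) with hA
  set B : ZMod p := (b : ZMod p) with hB
  set c : ZMod p := -A * B⁻¹ with hc
  have hBB : B * B⁻¹ = 1 := mul_inv_cancel₀ hpb
  have hcc : c * c = ((-1 : ℤ) : ZMod p) := by
    push_cast
    rw [hc]
    linear_combination B⁻¹ ^ 2 * hsum - (B * B⁻¹ + 1) * hBB
  let f : GaussianInt →+* ZMod p := Zsqrtd.lift ⟨c, hcc⟩
  have hfz : f z = 0 := by
    have h1 : f z = A + B * c := rfl
    rw [h1, hc]
    linear_combination (-A) * hBB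
  have hfstar : f (star z) = 2 * A := by
    have h1 : f (star z) = A + ((-b : ℤ) : ZMod p) * c := rfl
    rw [h1]
    push_cast
    rw [← hB, hc]
    linear_combination A * hBB
  have h2 : (2 : ZMod p) ≠ 0 := by
    rw [Ne, show ((2 : ZMod p)) = ((2 : ℕ) : ZMod p) by norm_num,
      ZMod.natCast_eq_zero_iff]
    intro hd
    have h2p := (Nat.prime_dvd_prime_iff_eq hp Nat.prime_two).mp hd
    rcases hodd with ⟨t, ht⟩
    omega
  have hzero : f (z ^ n) = 0 := by
    rw [map_pow, hfz, zero_pow (by omega : n ≠ 0)]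
  have hnonzero : f (z ^ n) ≠ 0 := by
    rw [← hstar, map_pow, hfstar]
    exact pow_ne_zero _ (mul_ne_zero h2 hpa)
  exact hnonzero hzero

/-- A Gaussian integer ζ satisfies ζⁿ ∈ ℝ for some n ≥ 1 iff ζ is an integer
multiple of 1, i, 1+i or 1−i. -/
theorem gaussian_power_real_iff (ζ : ℂ) (hζ : ∃ a b : ℤ, ζ = (a : ℂ) + (b : ℂ) * I) :
    (∃ n : ℕ, 1 ≤ n ∧ (ζ ^ n).im = 0) ↔
      ∃ k : ℤ, ζ = (k : ℂ) ∨ ζ = (k : ℂ) * I ∨ ζ = (k : ℂ) * (1 + I) ∨ ζ = (k : ℂ) * (1 - I) := by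
  obtain ⟨a, b, rfl⟩ := hζ
  constructor
  · rintro ⟨n, hn, him⟩
    by_cases hb : b = 0
    · exact ⟨a, Or.inl (by rw [hb]; simp)⟩
    by_cases ha : a = 0
    · exact ⟨b, Or.inr (Or.inl (by rw [ha]; simp))⟩
    by_cases hab : a = b
    · exact ⟨a, Or.inr (Or.inr (Or.inl (by rw [← hab]; push_cast; ring)))⟩
    by_cases hab' : a = -b
    · refine ⟨a, Or.inr (Or.inr (Or.inr ?_))⟩
      have hba : b = -a := by omega
      rw [hba]; push_cast; ring
    exfalso
    have hdpos : 0 < Int.gcd a b := Int.gcd_pos_of_ne_zero_left b ha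
    have hd0 : ((Int.gcd a b : ℤ)) ≠ 0 := by exact_mod_cast hdpos.ne'
    obtain ⟨g, a', b', hg0, rfl, rfl, hcop⟩ :
        ∃ (g a' b' : ℤ), g ≠ 0 ∧ a = g * a' ∧ b = g * b' ∧ IsCoprime a' b' := by
      refine ⟨(Int.gcd a b : ℤ), a / (Int.gcd a b : ℤ), b / (Int.gcd a b : ℤ), hd0,
        (Int.mul_ediv_cancel' (Int.gcd_dvd_left a b)).symm,
        (Int.mul_ediv_cancel' (Int.gcd_dvd_right a b)).symm, ?_⟩
      rw [Int.isCoprime_iff_gcd_eq_one]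
      exact Int.gcd_div_gcd_div_gcd hdpos
    have ha0' : a' ≠ 0 := right_ne_zero_of_mul ha
    have hb0' : b' ≠ 0 := right_ne_zero_of_mul hb
    have hsq' : a' ^ 2 ≠ b' ^ 2 := by
      intro h
      have h2 : (a' - b') * (a' + b') = 0 := by linear_combination h
      rcases mul_eq_zero.mp h2 with h3 | h3
      · have hEq : a' = b' := by omega
        exact hab (by rw [hEq])
      · have hEq : a' = -b' := by omega
        exact hab' (by rw [hEq]; ring)
    have hfac : (((g * a' : ℤ) : ℂ) + ((g * b' : ℤ) : ℂ) * I)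
        = ((g : ℤ) : ℂ) * ((a' : ℂ) + (b' : ℂ) * I) := by
      push_cast; ring
    have hgr : (((g : ℤ) : ℂ)) ^ n = (((g ^ n : ℤ) : ℝ) : ℂ) := by
      push_cast; ring
    rw [hfac, mul_pow, hgr, Complex.im_ofReal_mul] at him
    have hgn : (((g ^ n : ℤ) : ℝ)) ≠ 0 := by
      simp only [ne_eq, Int.cast_eq_zero, pow_eq_zero_iff (by omega : n ≠ 0)]
      exact hg0
    exact key a' b' hcop ha0' hb0' hsq' n hn ((mul_eq_zero.mp him).resolve_left hgn)
  · rintro ⟨k, h | h | h | h⟩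
    · exact ⟨1, le_refl 1, by rw [h]; simp⟩
    · refine ⟨2, by norm_num, ?_⟩
      have hh : ((k : ℂ) * I) ^ 2 = ((-(k ^ 2) : ℤ) : ℂ) := by
        push_cast; rw [mul_pow, I_sq]; ring
      rw [h, hh, Complex.intCast_im]
    · refine ⟨4, by norm_num, ?_⟩
      have hI : (1 + I) ^ 4 = -4 := by
        have h2 : (1 + I) ^ 2 = 2 * I := by rw [add_sq, I_sq]; ring
        calc (1 + I) ^ 4 = ((1 + I) ^ 2) ^ 2 := by ring
        _ = (2 * I) ^ 2 := by rw [h2]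
        _ = -4 := by rw [mul_pow, I_sq]; ring
      have hh : ((k : ℂ) * (1 + I)) ^ 4 = ((-4 * k ^ 4 : ℤ) : ℂ) := by
        rw [mul_pow, hI]; push_cast; ring
      rw [h, hh, Complex.intCast_im]
    · refine ⟨4, by norm_num, ?_⟩
      have hI : (1 - I) ^ 4 = -4 := by
        have h2 : (1 - I) ^ 2 = -2 * I := by rw [sub_sq, I_sq]; ring
        calc (1 - I) ^ 4 = ((1 - I) ^ 2) ^ 2 := by ring
        _ = (-2 * I) ^ 2 := by rw [h2]
        _ = -4 := by rw [mul_pow, I_sq]; ring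
      have hh : ((k : ℂ) * (1 - I)) ^ 4 = ((-4 * k ^ 4 : ℤ) : ℂ) := by
        rw [mul_pow, hI]; push_cast; ring
      rw [h, hh, Complex.intCast_im]
end
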